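/- Let Ṡ = ∏_{j=1}^m X_j − p_1(1 + ∑_{j=1}^m μ_j^{-1}Ẋ_j) and X = ∏_{j=1}^m X_j(X_j−1) − ∏_{j=1}^m X_j². Then E[Ṡ X] = p_1( p_1∏_{j=1}^m(2+μ_j) − ∏_{j=1}^m(1+3μ_j+μ_j²) − p_1² − 2p_1²s_1 + p_1∏_{j=1}^m(1+μ_j) + p_1∑_{j=1}^m μ_j^{-1}(1+2μ_j)∏_{k≠j}(1+μ_k) ). -/

import Mathlib

open MeasureTheory ProbabilityTheory Finset
open scoped NNReal
open Real
open scoped ENNReal Nat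

lemma hasSum_poisson_df (r : ℝ≥0) (k : ℕ) :
    HasSum (fun n : ℕ => (n.descFactorial k : ℝ) * poissonPMFReal r n) ((r : ℝ) ^ k) := by
  have key : ∀ n : ℕ, ((n + k).descFactorial k : ℝ) * poissonPMFReal r (n + k)
      = (r : ℝ) ^ k * poissonPMFReal r n := by
    intro n
    unfold poissonPMFReal
    rw [Nat.add_descFactorial_eq_ascFactorial, ← Nat.factorial_mul_ascFactorial n k]
    have h1 : ((n ! : ℕ) : ℝ) ≠ 0 := by positivity
    have h2 : (((n+1).ascFactorial k : ℕ) : ℝ) ≠ 0 := by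
      exact_mod_cast (Nat.ascFactorial_pos n k).ne'
    push_cast
    field_simp
    ring
  have hinj : Function.Injective (fun n : ℕ => n + k) := add_left_injective k
  refine (Function.Injective.hasSum_iff hinj ?_).mp ?_
  · intro n hn
    simp only [Set.mem_range, not_exists] at hn
    have : n < k := by
      by_contra h
      exact hn (n - k) (by omega)
    simp [Nat.descFactorial_eq_zero_iff_lt.2 this]
  · show HasSum (fun n : ℕ => ((n + k).descFactorial k : ℝ) * poissonPMFReal r (n + k)) _
    simp only [key]
    simpa [poissonPMFReal] using (poissonPMFRealSum r).mul_left ((r : ℝ) ^ k)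

lemma integrable_poisson_df (r : ℝ≥0) (k : ℕ) :
    Integrable (fun n : ℕ => (n.descFactorial k : ℝ)) (poissonMeasure r) := by
  constructor
  · exact (measurable_of_countable _).aestronglyMeasurable
  · rw [HasFiniteIntegral, lintegral_countable']
    have : ∀ n : ℕ, ‖(n.descFactorial k : ℝ)‖ₑ * poissonMeasure r {n}
        = ENNReal.ofReal ((n.descFactorial k : ℝ) * poissonPMFReal r n) := by
      intro n
      rw [poissonMeasure_singleton]
      show ‖((n.descFactorial k : ℕ) : ℝ)‖ₑ * ENNReal.ofReal (poissonPMFReal r n) = _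
      rw [Real.enorm_eq_ofReal (Nat.cast_nonneg _),
        ← ENNReal.ofReal_mul (Nat.cast_nonneg _)]
    simp only [this]
    rw [← ENNReal.ofReal_tsum_of_nonneg (fun n => mul_nonneg (Nat.cast_nonneg _) poissonPMFReal_nonneg)
      (hasSum_poisson_df r k).summable]
    exact ENNReal.ofReal_lt_top

lemma integral_poisson_df (r : ℝ≥0) (k : ℕ) :
    ∫ n : ℕ, (n.descFactorial k : ℝ) ∂poissonMeasure r = (r : ℝ) ^ k := by
  rw [integral_poissonMeasure' (integrable_poisson_df r k)]
  rw [← (hasSum_poisson_df r k).tsum_eq]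
  congr 1 with n
  rw [smul_eq_mul, mul_comm]
  rfl

lemma cdf1 (n : ℕ) : ((n.descFactorial 1 : ℕ) : ℝ) = n := by
  simp [Nat.descFactorial_one]

lemma cdf2 (n : ℕ) : ((n.descFactorial 2 : ℕ) : ℝ) = n * (n - 1) :=
  Nat.cast_descFactorial_two ℝ n

lemma cdf3 (n : ℕ) : ((n.descFactorial 3 : ℕ) : ℝ) = n * (n - 1) * (n - 2) := by
  match n with
  | 0 => norm_num [Nat.descFactorial]
  | 1 => norm_num [Nat.descFactorial]
  | 2 => norm_num [Nat.descFactorial]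
  | (n+3) =>
    show (((n + 3 - 2) * ((n + 3 - 1) * ((n + 3 - 0) * 1)) : ℕ) : ℝ) = _
    push_cast
    ring

lemma combo_integrable (r : ℝ≥0) (c0 c1 c2 c3 : ℝ) :
    Integrable (fun n : ℕ => c0 + c1 * (n.descFactorial 1 : ℝ) + c2 * (n.descFactorial 2 : ℝ)
      + c3 * (n.descFactorial 3 : ℝ)) (poissonMeasure r) :=
  (((integrable_const c0).add ((integrable_poisson_df r 1).const_mul c1)).add
    ((integrable_poisson_df r 2).const_mul c2)).add ((integrable_poisson_df r 3).const_mul c3)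

lemma combo_integral (r : ℝ≥0) (c0 c1 c2 c3 : ℝ) :
    ∫ n : ℕ, (c0 + c1 * (n.descFactorial 1 : ℝ) + c2 * (n.descFactorial 2 : ℝ)
      + c3 * (n.descFactorial 3 : ℝ)) ∂poissonMeasure r
      = c0 + c1 * r + c2 * (r : ℝ) ^ 2 + c3 * (r : ℝ) ^ 3 := by
  have i0 : Integrable (fun _ : ℕ => c0) (poissonMeasure r) := integrable_const _
  have i1 := (integrable_poisson_df r 1).const_mul c1
  have i2 := (integrable_poisson_df r 2).const_mul c2
  have i3 := (integrable_poisson_df r 3).const_mul c3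
  have i01 : Integrable (fun n : ℕ => c0 + c1 * (n.descFactorial 1 : ℝ)) (poissonMeasure r) :=
    i0.add i1
  have i012 : Integrable (fun n : ℕ => c0 + c1 * (n.descFactorial 1 : ℝ)
      + c2 * (n.descFactorial 2 : ℝ)) (poissonMeasure r) := i01.add i2
  rw [integral_add i012 i3, integral_add i01 i2, integral_add i0 i1,
    integral_const, integral_const_mul, integral_const_mul, integral_const_mul,
    integral_poisson_df, integral_poisson_df, integral_poisson_df]
  simp [pow_one]

lemma combo_spec (r : ℝ≥0) {f : ℕ → ℝ} (c0 c1 c2 c3 : ℝ)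
    (h : ∀ n : ℕ, f n = c0 + c1 * (n.descFactorial 1 : ℝ) + c2 * (n.descFactorial 2 : ℝ)
      + c3 * (n.descFactorial 3 : ℝ)) :
    Integrable f (poissonMeasure r) ∧
      ∫ n : ℕ, f n ∂poissonMeasure r = c0 + c1 * r + c2 * (r : ℝ) ^ 2 + c3 * (r : ℝ) ^ 3 := by
  have hf : f = fun n : ℕ => c0 + c1 * (n.descFactorial 1 : ℝ) + c2 * (n.descFactorial 2 : ℝ)
      + c3 * (n.descFactorial 3 : ℝ) := funext h
  rw [hf]
  exact ⟨combo_integrable r c0 c1 c2 c3, combo_integral r c0 c1 c2 c3⟩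

lemma specA (r : ℝ≥0) : Integrable (fun n : ℕ => (n : ℝ) * ((n : ℝ) - 1)) (poissonMeasure r) ∧
    ∫ n : ℕ, (n : ℝ) * ((n : ℝ) - 1) ∂poissonMeasure r = (r : ℝ) ^ 2 := by
  have := combo_spec r (f := fun n : ℕ => (n : ℝ) * ((n : ℝ) - 1)) 0 0 1 0
    (fun n => by simp only [cdf1, cdf2, cdf3]; ring)
  refine ⟨this.1, this.2.trans (by ring)⟩

lemma specB (r : ℝ≥0) : Integrable (fun n : ℕ => (n : ℝ) ^ 2) (poissonMeasure r) ∧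
    ∫ n : ℕ, (n : ℝ) ^ 2 ∂poissonMeasure r = (r : ℝ) + (r : ℝ) ^ 2 := by
  have := combo_spec r (f := fun n : ℕ => (n : ℝ) ^ 2) 0 1 1 0
    (fun n => by simp only [cdf1, cdf2, cdf3]; ring)
  refine ⟨this.1, this.2.trans (by ring)⟩

lemma specPA (r : ℝ≥0) :
    Integrable (fun n : ℕ => (n : ℝ) * ((n : ℝ) * ((n : ℝ) - 1))) (poissonMeasure r) ∧
    ∫ n : ℕ, (n : ℝ) * ((n : ℝ) * ((n : ℝ) - 1)) ∂poissonMeasure r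
      = (r : ℝ) ^ 2 * (2 + (r : ℝ)) := by
  have := combo_spec r (f := fun n : ℕ => (n : ℝ) * ((n : ℝ) * ((n : ℝ) - 1))) 0 0 2 1
    (fun n => by simp only [cdf1, cdf2, cdf3]; ring)
  refine ⟨this.1, this.2.trans (by ring)⟩

lemma specPB (r : ℝ≥0) :
    Integrable (fun n : ℕ => (n : ℝ) * (n : ℝ) ^ 2) (poissonMeasure r) ∧
    ∫ n : ℕ, (n : ℝ) * (n : ℝ) ^ 2 ∂poissonMeasure r
      = (r : ℝ) * (1 + 3 * (r : ℝ) + (r : ℝ) ^ 2) := by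
  have := combo_spec r (f := fun n : ℕ => (n : ℝ) * (n : ℝ) ^ 2) 0 1 3 1
    (fun n => by simp only [cdf1, cdf2, cdf3]; ring)
  refine ⟨this.1, this.2.trans (by ring)⟩

lemma specCA (r : ℝ≥0) :
    Integrable (fun n : ℕ => ((n : ℝ) - r) * ((n : ℝ) * ((n : ℝ) - 1))) (poissonMeasure r) ∧
    ∫ n : ℕ, ((n : ℝ) - r) * ((n : ℝ) * ((n : ℝ) - 1)) ∂poissonMeasure r
      = 2 * (r : ℝ) ^ 2 := by
  have := combo_spec r (f := fun n : ℕ => ((n : ℝ) - r) * ((n : ℝ) * ((n : ℝ) - 1)))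
    0 0 (2 - r) 1 (fun n => by simp only [cdf1, cdf2, cdf3]; ring)
  refine ⟨this.1, this.2.trans (by ring)⟩

lemma specCB (r : ℝ≥0) :
    Integrable (fun n : ℕ => ((n : ℝ) - r) * (n : ℝ) ^ 2) (poissonMeasure r) ∧
    ∫ n : ℕ, ((n : ℝ) - r) * (n : ℝ) ^ 2 ∂poissonMeasure r
      = (r : ℝ) * (1 + 2 * (r : ℝ)) := by
  have := combo_spec r (f := fun n : ℕ => ((n : ℝ) - r) * (n : ℝ) ^ 2)
    0 (1 - r) (3 - r) 1 (fun n => by simp only [cdf1, cdf2, cdf3]; ring)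
  refine ⟨this.1, this.2.trans (by ring)⟩

theorem my_integrable_pi {n : ℕ} {E : Fin n → Type*} [∀ i, MeasurableSpace (E i)]
    (μ : ∀ i, Measure (E i)) [∀ i, SigmaFinite (μ i)] {f : ∀ i, E i → ℝ}
    (hf : ∀ i, Integrable (f i) (μ i)) :
    Integrable (fun x : ∀ i, E i => ∏ i, f i (x i)) (Measure.pi μ) := by
  induction n with
  | zero =>
    have : IsProbabilityMeasure (Measure.pi μ) := ⟨by rw [Measure.pi_empty_univ]⟩
    simp only [Finset.univ_eq_empty, Finset.prod_empty]
    apply integrable_const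
  | succ n n_ih =>
    have := ((measurePreserving_piFinSuccAbove μ 0).symm)
    rw [← this.integrable_comp_emb (MeasurableEquiv.measurableEmbedding _)]
    simp_rw [MeasurableEquiv.piFinSuccAbove_symm_apply, Fin.insertNthEquiv,
      Fin.prod_univ_succ, Fin.insertNth_zero]
    simp only [Fin.zero_succAbove, Equiv.coe_fn_mk, Function.comp_def, Fin.cons_zero,
      Fin.cons_succ]
    have : Integrable (fun (x : (j : Fin n) → E (Fin.succ j)) ↦ ∏ j, f (Fin.succ j) (x j))
        (Measure.pi fun j => μ (Fin.succ j)) := n_ih _ (fun i ↦ hf _)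
    exact Integrable.mul_prod (hf 0) this

theorem my_integral_pi {n : ℕ} {E : Fin n → Type*} [∀ i, MeasurableSpace (E i)]
    (μ : ∀ i, Measure (E i)) [∀ i, SigmaFinite (μ i)] (f : ∀ i, E i → ℝ) :
    ∫ x : ∀ i, E i, ∏ i, f i (x i) ∂Measure.pi μ = ∏ i, ∫ x, f i x ∂μ i := by
  induction n with
  | zero =>
    have : IsProbabilityMeasure (Measure.pi μ) := by
      constructor
      rw [Measure.pi_empty_univ]
    simp
  | succ n n_ih =>
    calc
      _ = ∫ x : E 0 × ((i : Fin n) → E (Fin.succ i)),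
          f 0 x.1 * ∏ i : Fin n, f (Fin.succ i) (x.2 i)
          ∂((μ 0).prod (Measure.pi fun i => μ (Fin.succ i))) := by
        rw [integral_fin_nat_prod_eq_prod f, Fin.prod_univ_succ, ← n_ih _ fun i => f (Fin.succ i),
          ← integral_prod_mul]
      _ = (∫ x, f 0 x ∂μ 0) * ∏ i : Fin n, ∫ x, f (Fin.succ i) x ∂μ (Fin.succ i) := by
        rw [← n_ih _ fun i => f (Fin.succ i), ← integral_prod_mul]
      _ = ∏ i, ∫ x, f i x ∂μ i := by rw [Fin.prod_univ_succ]

/-- The law of `m` independent Poisson random variables `X_j ~ Poisson (μ j)`,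
as a product measure on `Fin m → ℕ`. -/
noncomputable def poissonPi {m : ℕ} (μ : Fin m → ℝ≥0) : Measure (Fin m → ℕ) :=
  Measure.pi fun j => poissonMeasure (μ j)

lemma integral_poissonPi {m : ℕ} (μ : Fin m → ℝ≥0) (f : Fin m → ℕ → ℝ) :
    ∫ x : Fin m → ℕ, ∏ j, f j (x j) ∂poissonPi μ
      = ∏ j, ∫ n, f j n ∂poissonMeasure (μ j) := by
  exact my_integral_pi (fun j => poissonMeasure (μ j)) f

lemma integrable_poissonPi {m : ℕ} (μ : Fin m → ℝ≥0) (f : Fin m → ℕ → ℝ)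
    (hf : ∀ j, Integrable (f j) (poissonMeasure (μ j))) :
    Integrable (fun x : Fin m → ℕ => ∏ j, f j (x j)) (poissonPi μ) := by
  exact my_integrable_pi (fun j => poissonMeasure (μ j)) hf


lemma prod_ite_erase {α : Type*} [DecidableEq α] [Fintype α] (j : α) (a : ℝ) (g : α → ℝ) :
    ∏ k, (if k = j then a else g k) = a * ∏ k ∈ univ.erase j, g k := by
  rw [← Finset.mul_prod_erase univ (fun k => if k = j then a else g k) (mem_univ j), if_pos rfl]
  congr 1
  exact Finset.prod_congr rfl fun k hk => if_neg (Finset.ne_of_mem_erase hk)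

section Main

variable {m : ℕ} (μ : Fin m → ℝ≥0)

lemma fcaInt (j k : Fin m) :
    Integrable (fun n : ℕ => (if k = j then (n : ℝ) - (μ j : ℝ) else 1)
      * ((n : ℝ) * ((n : ℝ) - 1))) (poissonMeasure (μ k)) := by
  by_cases h : k = j
  · subst h
    simp only [eq_self_iff_true, if_true]
    exact (specCA (μ k)).1
  · simp only [if_neg h, one_mul]
    exact (specA (μ k)).1

lemma fcbInt (j k : Fin m) :
    Integrable (fun n : ℕ => (if k = j then (n : ℝ) - (μ j : ℝ) else 1) * (n : ℝ) ^ 2)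
      (poissonMeasure (μ k)) := by
  by_cases h : k = j
  · subst h
    simp only [eq_self_iff_true, if_true]
    exact (specCB (μ k)).1
  · simp only [if_neg h, one_mul]
    exact (specB (μ k)).1

lemma fcaVal (j k : Fin m) :
    ∫ n : ℕ, (if k = j then (n : ℝ) - (μ j : ℝ) else 1) * ((n : ℝ) * ((n : ℝ) - 1))
      ∂poissonMeasure (μ k)
    = if k = j then 2 * (μ j : ℝ) ^ 2 else (μ k : ℝ) ^ 2 := by
  by_cases h : k = j
  · subst h
    simp only [eq_self_iff_true, if_true]
    exact (specCA (μ k)).2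
  · simp only [if_neg h, one_mul]
    exact (specA (μ k)).2

lemma fcbVal (j k : Fin m) :
    ∫ n : ℕ, (if k = j then (n : ℝ) - (μ j : ℝ) else 1) * (n : ℝ) ^ 2 ∂poissonMeasure (μ k)
    = if k = j then (μ j : ℝ) * (1 + 2 * (μ j : ℝ)) else (μ k : ℝ) + (μ k : ℝ) ^ 2 := by
  by_cases h : k = j
  · subst h
    simp only [eq_self_iff_true, if_true]
    exact (specCB (μ k)).2
  · simp only [if_neg h, one_mul]
    exact (specB (μ k)).2

lemma sdot_pointwise (x : Fin m → ℕ) :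
    (∏ j, (x j : ℝ) - (∏ j, (μ j : ℝ)) * (1 + ∑ j, ((μ j : ℝ))⁻¹ * ((x j : ℝ) - (μ j : ℝ)))) *
      (∏ j, ((x j : ℝ) * ((x j : ℝ) - 1)) - ∏ j, (x j : ℝ) ^ 2)
    = ∏ j, ((x j : ℝ) * ((x j : ℝ) * ((x j : ℝ) - 1)))
      - ∏ j, ((x j : ℝ) * (x j : ℝ) ^ 2)
      - (∏ i, (μ i : ℝ)) * ∏ j, ((x j : ℝ) * ((x j : ℝ) - 1))
      + (∏ i, (μ i : ℝ)) * ∏ j, (x j : ℝ) ^ 2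
      - ∑ j, ((∏ i, (μ i : ℝ)) * ((μ j : ℝ))⁻¹) *
          ∏ k, ((if k = j then (x k : ℝ) - (μ j : ℝ) else 1) * ((x k : ℝ) * ((x k : ℝ) - 1)))
      + ∑ j, ((∏ i, (μ i : ℝ)) * ((μ j : ℝ))⁻¹) *
          ∏ k, ((if k = j then (x k : ℝ) - (μ j : ℝ) else 1) * (x k : ℝ) ^ 2) := by
  have e1 : ∏ j, ((x j : ℝ) * ((x j : ℝ) * ((x j : ℝ) - 1)))
      = (∏ j, (x j : ℝ)) * ∏ j, ((x j : ℝ) * ((x j : ℝ) - 1)) := by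
    rw [← Finset.prod_mul_distrib]
  have e2 : ∏ j, ((x j : ℝ) * (x j : ℝ) ^ 2)
      = (∏ j, (x j : ℝ)) * ∏ j, (x j : ℝ) ^ 2 := by
    rw [← Finset.prod_mul_distrib]
  have e3 : ∀ j, ∏ k, ((if k = j then (x k : ℝ) - (μ j : ℝ) else 1) * ((x k : ℝ) * ((x k : ℝ) - 1)))
      = ((x j : ℝ) - (μ j : ℝ)) * ∏ k, ((x k : ℝ) * ((x k : ℝ) - 1)) := by
    intro j
    rw [Finset.prod_mul_distrib, Finset.prod_ite_eq' univ j (fun k => (x k : ℝ) - (μ j : ℝ)),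
      if_pos (mem_univ j)]
  have e4 : ∀ j, ∏ k, ((if k = j then (x k : ℝ) - (μ j : ℝ) else 1) * (x k : ℝ) ^ 2)
      = ((x j : ℝ) - (μ j : ℝ)) * ∏ k, (x k : ℝ) ^ 2 := by
    intro j
    rw [Finset.prod_mul_distrib, Finset.prod_ite_eq' univ j (fun k => (x k : ℝ) - (μ j : ℝ)),
      if_pos (mem_univ j)]
  have key : ∀ C : ℝ, ∑ j, ((∏ i, (μ i : ℝ)) * ((μ j : ℝ))⁻¹) * (((x j : ℝ) - (μ j : ℝ)) * C)
      = (∏ i, (μ i : ℝ)) * (∑ j, ((μ j : ℝ))⁻¹ * ((x j : ℝ) - (μ j : ℝ))) * C := by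
    intro C
    rw [mul_comm ((∏ i, (μ i : ℝ)) * (∑ j, ((μ j : ℝ))⁻¹ * ((x j : ℝ) - (μ j : ℝ)))) C,
      Finset.mul_sum, Finset.mul_sum]
    exact Finset.sum_congr rfl (fun j _ => by ring)
  simp only [e1, e2, e3, e4, key]
  ring

end Main

theorem expectation_Sdot_X (m : ℕ) (hm : 2 ≤ m) (μ : Fin m → ℝ≥0) (hμ : ∀ j, 0 < μ j) :
    ∫ x : Fin m → ℕ, (∏ j, (x j : ℝ) - (∏ j, (μ j : ℝ)) * (1 + ∑ j, ((μ j : ℝ))⁻¹ * ((x j : ℝ) - (μ j : ℝ)))) * (∏ j, ((x j : ℝ) * ((x j : ℝ) - 1)) - ∏ j, (x j : ℝ) ^ 2) ∂(poissonPi μ)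
      = (∏ j, (μ j : ℝ)) * ((∏ j, (μ j : ℝ)) * ∏ j, (2 + (μ j : ℝ)) - ∏ j, (1 + 3 * (μ j : ℝ) + (μ j : ℝ) ^ 2) - (∏ j, (μ j : ℝ)) ^ 2 - 2 * (∏ j, (μ j : ℝ)) ^ 2 * (∑ j, ((μ j : ℝ))⁻¹) + (∏ j, (μ j : ℝ)) * ∏ j, (1 + (μ j : ℝ)) + (∏ j, (μ j : ℝ)) * ∑ j, ((μ j : ℝ))⁻¹ * (1 + 2 * (μ j : ℝ)) * ∏ k ∈ univ.erase j, (1 + (μ k : ℝ))) := by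
  have hμ0 : ∀ j, ((μ j : ℝ)) ≠ 0 := fun j => ne_of_gt (by exact_mod_cast hμ j)
  simp only [sdot_pointwise μ]
  -- integrability of each piece
  have I1 : Integrable (fun x : Fin m → ℕ => ∏ j, ((x j : ℝ) * ((x j : ℝ) * ((x j : ℝ) - 1))))
      (poissonPi μ) :=
    integrable_poissonPi μ (fun j n => (n : ℝ) * ((n : ℝ) * ((n : ℝ) - 1)))
      (fun j => (specPA (μ j)).1)
  have I2 : Integrable (fun x : Fin m → ℕ => ∏ j, ((x j : ℝ) * (x j : ℝ) ^ 2)) (poissonPi μ) :=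
    integrable_poissonPi μ (fun j n => (n : ℝ) * (n : ℝ) ^ 2) (fun j => (specPB (μ j)).1)
  have I3 : Integrable (fun x : Fin m → ℕ =>
      (∏ i, (μ i : ℝ)) * ∏ j, ((x j : ℝ) * ((x j : ℝ) - 1))) (poissonPi μ) :=
    (integrable_poissonPi μ (fun j n => (n : ℝ) * ((n : ℝ) - 1))
      (fun j => (specA (μ j)).1)).const_mul _
  have I4 : Integrable (fun x : Fin m → ℕ => (∏ i, (μ i : ℝ)) * ∏ j, (x j : ℝ) ^ 2)
      (poissonPi μ) :=
    (integrable_poissonPi μ (fun j n => (n : ℝ) ^ 2) (fun j => (specB (μ j)).1)).const_mul _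
  have I5j : ∀ j : Fin m, Integrable (fun x : Fin m → ℕ =>
      ((∏ i, (μ i : ℝ)) * ((μ j : ℝ))⁻¹) *
        ∏ k, ((if k = j then (x k : ℝ) - (μ j : ℝ) else 1) * ((x k : ℝ) * ((x k : ℝ) - 1))))
      (poissonPi μ) := fun j =>
    (integrable_poissonPi μ
      (fun k n => (if k = j then (n : ℝ) - (μ j : ℝ) else 1) * ((n : ℝ) * ((n : ℝ) - 1)))
      (fun k => fcaInt μ j k)).const_mul _
  have I6j : ∀ j : Fin m, Integrable (fun x : Fin m → ℕ =>
      ((∏ i, (μ i : ℝ)) * ((μ j : ℝ))⁻¹) *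
        ∏ k, ((if k = j then (x k : ℝ) - (μ j : ℝ) else 1) * (x k : ℝ) ^ 2))
      (poissonPi μ) := fun j =>
    (integrable_poissonPi μ
      (fun k n => (if k = j then (n : ℝ) - (μ j : ℝ) else 1) * (n : ℝ) ^ 2)
      (fun k => fcbInt μ j k)).const_mul _
  have I5 : Integrable (fun x : Fin m → ℕ => ∑ j, ((∏ i, (μ i : ℝ)) * ((μ j : ℝ))⁻¹) *
      ∏ k, ((if k = j then (x k : ℝ) - (μ j : ℝ) else 1) * ((x k : ℝ) * ((x k : ℝ) - 1))))
      (poissonPi μ) := integrable_finset_sum univ (fun j _ => I5j j)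
  have I6 : Integrable (fun x : Fin m → ℕ => ∑ j, ((∏ i, (μ i : ℝ)) * ((μ j : ℝ))⁻¹) *
      ∏ k, ((if k = j then (x k : ℝ) - (μ j : ℝ) else 1) * (x k : ℝ) ^ 2))
      (poissonPi μ) := integrable_finset_sum univ (fun j _ => I6j j)
  have I12 : Integrable (fun x : Fin m → ℕ =>
      ∏ j, ((x j : ℝ) * ((x j : ℝ) * ((x j : ℝ) - 1))) - ∏ j, ((x j : ℝ) * (x j : ℝ) ^ 2))
      (poissonPi μ) := I1.sub I2
  have I123 : Integrable (fun x : Fin m → ℕ =>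
      ∏ j, ((x j : ℝ) * ((x j : ℝ) * ((x j : ℝ) - 1))) - ∏ j, ((x j : ℝ) * (x j : ℝ) ^ 2)
      - (∏ i, (μ i : ℝ)) * ∏ j, ((x j : ℝ) * ((x j : ℝ) - 1))) (poissonPi μ) := I12.sub I3
  have I1234 : Integrable (fun x : Fin m → ℕ =>
      ∏ j, ((x j : ℝ) * ((x j : ℝ) * ((x j : ℝ) - 1))) - ∏ j, ((x j : ℝ) * (x j : ℝ) ^ 2)
      - (∏ i, (μ i : ℝ)) * ∏ j, ((x j : ℝ) * ((x j : ℝ) - 1))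
      + (∏ i, (μ i : ℝ)) * ∏ j, (x j : ℝ) ^ 2) (poissonPi μ) := I123.add I4
  have I12345 : Integrable (fun x : Fin m → ℕ =>
      ∏ j, ((x j : ℝ) * ((x j : ℝ) * ((x j : ℝ) - 1))) - ∏ j, ((x j : ℝ) * (x j : ℝ) ^ 2)
      - (∏ i, (μ i : ℝ)) * ∏ j, ((x j : ℝ) * ((x j : ℝ) - 1))
      + (∏ i, (μ i : ℝ)) * ∏ j, (x j : ℝ) ^ 2
      - ∑ j, ((∏ i, (μ i : ℝ)) * ((μ j : ℝ))⁻¹) *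
          ∏ k, ((if k = j then (x k : ℝ) - (μ j : ℝ) else 1) * ((x k : ℝ) * ((x k : ℝ) - 1))))
      (poissonPi μ) := I1234.sub I5
  rw [integral_add I12345 I6, integral_sub I1234 I5, integral_add I123 I4, integral_sub I12 I3,
    integral_sub I1 I2, integral_finset_sum univ (fun j _ => I5j j),
    integral_finset_sum univ (fun j _ => I6j j), integral_const_mul, integral_const_mul,
    integral_poissonPi μ (fun j n => (n : ℝ) * ((n : ℝ) * ((n : ℝ) - 1))),
    integral_poissonPi μ (fun j n => (n : ℝ) * (n : ℝ) ^ 2),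
    integral_poissonPi μ (fun j n => (n : ℝ) * ((n : ℝ) - 1)),
    integral_poissonPi μ (fun j n => (n : ℝ) ^ 2)]
  have hS5 : ∀ j : Fin m, ∫ x : Fin m → ℕ, ((∏ i, (μ i : ℝ)) * ((μ j : ℝ))⁻¹) *
      ∏ k, ((if k = j then (x k : ℝ) - (μ j : ℝ) else 1) * ((x k : ℝ) * ((x k : ℝ) - 1)))
      ∂poissonPi μ = 2 * (∏ i, (μ i : ℝ)) ^ 3 * ((μ j : ℝ))⁻¹ := by
    intro j
    rw [integral_const_mul, integral_poissonPi μ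
      (fun k n => (if k = j then (n : ℝ) - (μ j : ℝ) else 1) * ((n : ℝ) * ((n : ℝ) - 1)))]
    simp only [fcaVal μ j]
    rw [prod_ite_erase j (2 * (μ j : ℝ) ^ 2) (fun k => (μ k : ℝ) ^ 2)]
    have hq : (μ j : ℝ) * ∏ k ∈ univ.erase j, (μ k : ℝ) = ∏ i, (μ i : ℝ) :=
      Finset.mul_prod_erase univ (fun k => (μ k : ℝ)) (mem_univ j)
    rw [Finset.prod_pow, ← hq]
    field_simp [hμ0 j]
  have hS6 : ∀ j : Fin m, ∫ x : Fin m → ℕ, ((∏ i, (μ i : ℝ)) * ((μ j : ℝ))⁻¹) *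
      ∏ k, ((if k = j then (x k : ℝ) - (μ j : ℝ) else 1) * (x k : ℝ) ^ 2)
      ∂poissonPi μ = (∏ i, (μ i : ℝ)) * ((∏ i, (μ i : ℝ)) * (((μ j : ℝ))⁻¹ * (1 + 2 * (μ j : ℝ))
        * ∏ k ∈ univ.erase j, (1 + (μ k : ℝ)))) := by
    intro j
    rw [integral_const_mul, integral_poissonPi μ
      (fun k n => (if k = j then (n : ℝ) - (μ j : ℝ) else 1) * (n : ℝ) ^ 2)]
    simp only [fcbVal μ j]
    rw [prod_ite_erase j ((μ j : ℝ) * (1 + 2 * (μ j : ℝ))) (fun k => (μ k : ℝ) + (μ k : ℝ) ^ 2)]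
    have he : ∀ k : Fin m, (μ k : ℝ) + (μ k : ℝ) ^ 2 = (μ k : ℝ) * (1 + (μ k : ℝ)) :=
      fun k => by ring
    simp only [he]
    rw [Finset.prod_mul_distrib]
    have hq : (μ j : ℝ) * ∏ k ∈ univ.erase j, (μ k : ℝ) = ∏ i, (μ i : ℝ) :=
      Finset.mul_prod_erase univ (fun k => (μ k : ℝ)) (mem_univ j)
    rw [← hq]
    field_simp [hμ0 j]
  simp only [hS5, hS6]
  -- evaluate the four product integrals
  simp only [(fun j => (specPA (μ j)).2 : ∀ j : Fin m, _), (fun j => (specPB (μ j)).2 : ∀ j : Fin m, _),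
    (fun j => (specA (μ j)).2 : ∀ j : Fin m, _), (fun j => (specB (μ j)).2 : ∀ j : Fin m, _)]
  -- final algebra
  have r1 : ∏ j, ((μ j : ℝ) ^ 2 * (2 + (μ j : ℝ)))
      = (∏ j, (μ j : ℝ)) ^ 2 * ∏ j, (2 + (μ j : ℝ)) := by
    rw [Finset.prod_mul_distrib, Finset.prod_pow]
  have r2 : ∏ j, ((μ j : ℝ) * (1 + 3 * (μ j : ℝ) + (μ j : ℝ) ^ 2))
      = (∏ j, (μ j : ℝ)) * ∏ j, (1 + 3 * (μ j : ℝ) + (μ j : ℝ) ^ 2) := by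
    rw [Finset.prod_mul_distrib]
  have r3 : ∏ j, (μ j : ℝ) ^ 2 = (∏ j, (μ j : ℝ)) ^ 2 := by rw [Finset.prod_pow]
  have r4 : ∏ j, ((μ j : ℝ) + (μ j : ℝ) ^ 2) = (∏ j, (μ j : ℝ)) * ∏ j, (1 + (μ j : ℝ)) := by
    have he : ∀ k : Fin m, (μ k : ℝ) + (μ k : ℝ) ^ 2 = (μ k : ℝ) * (1 + (μ k : ℝ)) :=
      fun k => by ring
    simp only [he]
    rw [Finset.prod_mul_distrib]
  rw [r1, r2, r3, r4, ← Finset.mul_sum, ← Finset.mul_sum]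
  have r6 : ∑ j, ((∏ i, (μ i : ℝ)) * (((μ j : ℝ))⁻¹ * (1 + 2 * (μ j : ℝ))
        * ∏ k ∈ univ.erase j, (1 + (μ k : ℝ))))
      = (∏ i, (μ i : ℝ)) * ∑ j, ((μ j : ℝ))⁻¹ * (1 + 2 * (μ j : ℝ))
        * ∏ k ∈ univ.erase j, (1 + (μ k : ℝ)) := by
    rw [Finset.mul_sum]
  rw [r6]
  ring
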